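/- Let (X,⊥) be an irredundant orthogonality space of finite rank satisfying conditions (L1) and (R1). Then (X,⊥) satisfies condition (L2), and hence is linear. -/

import Mathlib

variable {X : Type*}

/-- The orthocomplement of a subset of an orthogonality space. -/
def ortho (perp : X → X → Prop) (A : Set X) : Set X := {e | ∀ a ∈ A, perp e a}

/-- A subset is orthoclosed if it coincides with its double orthocomplement. -/
def OrthoClosed (perp : X → X → Prop) (A : Set X) : Prop :=
  ortho perp (ortho perp A) = A

/-- The orthogonality space `(X, perp)` has rank `m`: it contains `m` mutually
orthogonal elements but not `m + 1`. -/
def HasRank (perp : X → X → Prop) (m : ℕ) : Prop :=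
  (∃ D : Finset X, D.card = m ∧ (D : Set X).Pairwise perp) ∧
    ∀ D : Finset X, (D : Set X).Pairwise perp → D.card ≤ m

/-- Irredundance: elements with the same orthocomplement coincide. -/
def Irredundant (perp : X → X → Prop) : Prop :=
  ∀ e f : X, ortho perp {e} = ortho perp {f} → e = f

/-- Condition (L₁). -/
def CondL1 (perp : X → X → Prop) : Prop :=
  ∀ e f : X, f ≠ e → ∃ g : X, perp g e ∧ ortho perp {e, g} = ortho perp {e, f}

/-- Condition (L₂). -/
def CondL2 (perp : X → X → Prop) : Prop :=
  ∀ e g : X, perp g e → ∃ f : X, f ≠ e ∧ f ≠ g ∧ ortho perp {e, g} = ortho perp {e, f}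

/-- The data required by condition (R₁) for a line `L`: a divisible subgroup `C`
of `ℝ/2πℤ` and an injective group homomorphism `κ` from `C` into the automorphism
group of `(X, perp)` such that every `κ t` maps `L` onto itself, the action on `L`
is transitive, and every `κ t` fixes `L^⊥` pointwise. -/
def R1Witness (perp : X → X → Prop) (L : Set X)
    (C : AddSubgroup (AddCircle (2 * Real.pi))) (κ : C → Equiv.Perm X) : Prop :=
  (∀ (c : C) (n : ℕ), n ≠ 0 → ∃ d : C, n • d = c) ∧
  Function.Injective κ ∧
  (∀ s t : C, κ (s + t) = κ s * κ t) ∧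
  (∀ (t : C) (x y : X), perp x y ↔ perp (κ t x) (κ t y)) ∧
  (∀ t : C, ⇑(κ t) '' L = L) ∧
  (∀ g ∈ L, ∀ h ∈ L, ∃ t : C, κ t g = h) ∧
  (∀ t : C, ∀ d ∈ ortho perp L, κ t d = d)

/-- Condition (R₁): every line admits such a family of automorphisms. -/
def CondR1 (perp : X → X → Prop) : Prop :=
  ∀ e f : X, e ≠ f →
    ∃ (C : AddSubgroup (AddCircle (2 * Real.pi))) (κ : C → Equiv.Perm X),
      R1Witness perp (ortho perp (ortho perp {e, f})) C κ

section helper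
variable (perp : X → X → Prop)

lemma ortho_anti {A B : Set X} (h : A ⊆ B) : ortho perp B ⊆ ortho perp A :=
  fun z hz a ha => hz a (h ha)

lemma subset_orthoOrtho (hsymm : ∀ x y : X, perp x y → perp y x) (A : Set X) :
    A ⊆ ortho perp (ortho perp A) :=
  fun a ha z hz => hsymm _ _ (hz a ha)

lemma ortho_ortho_ortho (hsymm : ∀ x y : X, perp x y → perp y x) (A : Set X) :
    ortho perp (ortho perp (ortho perp A)) = ortho perp A :=
  Set.Subset.antisymm (ortho_anti perp (subset_orthoOrtho perp hsymm A))
    (subset_orthoOrtho perp hsymm (ortho perp A))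

/-- Atomicity: in an irredundant orthogonality space satisfying (R₁), if every
element orthogonal to `g` is orthogonal to `h`, then `g = h`. -/
lemma atom_of_ortho_subset (hsymm : ∀ x y : X, perp x y → perp y x)
    (hirred : Irredundant perp) (hR1 : CondR1 perp) {g h : X}
    (hsub : ortho perp {g} ⊆ ortho perp {h}) : g = h := by
  by_contra hne
  obtain ⟨C, μ, _hdiv, _hinj, hhom, hperp, _himg, htrans, hfix⟩ := hR1 g h hne
  set N : Set X := ortho perp (ortho perp {g, h}) with hN
  have hμ0 : μ 0 = 1 := by
    have h0 : μ 0 = μ 0 * μ 0 := by rw [← hhom 0 0, add_zero]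
    have := h0.symm
    rwa [mul_eq_left] at this
  -- ortho of N is ortho {g,h}, which equals ortho {g}
  have horthoN : ortho perp N = ortho perp {g, h} := ortho_ortho_ortho perp hsymm {g, h}
  have hgh_g : ortho perp {g, h} = ortho perp {g} := by
    apply Set.Subset.antisymm
    · exact ortho_anti perp (by simp)
    · intro z hz a ha
      rcases ha with rfl | ha
      · exact hz a (by simp)
      · simp only [Set.mem_singleton_iff] at ha
        subst ha
        exact hsub hz a (by simp)
  have hgN : g ∈ N := subset_orthoOrtho perp hsymm {g, h} (by simp)
  have hhN : h ∈ N := subset_orthoOrtho perp hsymm {g, h} (by simp)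
  obtain ⟨d, hd⟩ := htrans h hhN g hgN
  -- show ortho {h} ⊆ ortho {g}
  have hsub' : ortho perp {h} ⊆ ortho perp {g} := by
    intro z hz
    have hzh : perp z h := hz h (by simp)
    have h1 : perp (μ d z) g := by
      have := (hperp d z h).mp hzh
      rwa [hd] at this
    have hmem : μ d z ∈ ortho perp N := by
      rw [horthoN]
      intro a ha
      rcases ha with rfl | ha
      · exact h1
      · simp only [Set.mem_singleton_iff] at ha
        subst ha
        exact hsub (fun a ha => by simp only [Set.mem_singleton_iff] at ha; subst ha; exact h1)
          a (by simp)
    have hfixz : μ (-d) (μ d z) = μ d z := hfix (-d) _ hmem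
    have hz_eq : z = μ d z := by
      have : μ (-d) (μ d z) = z := by
        have : μ (-d) * μ d = 1 := by rw [← hhom, neg_add_cancel, hμ0]
        calc μ (-d) (μ d z) = (μ (-d) * μ d) z := rfl
          _ = z := by rw [this]; rfl
      exact this.symm.trans hfixz
    intro a ha
    simp only [Set.mem_singleton_iff] at ha; subst ha
    rw [hz_eq]; exact h1
  exact hne (hirred g h (Set.Subset.antisymm hsub hsub'))

end helper

/-- An irredundant orthogonality space of finite rank
satisfying (L₁) and (R₁) also satisfies (L₂), and hence is linear. -/


theorem stmt13 {X : Type*} [Nonempty X] (perp : X → X → Prop)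
    (hsymm : ∀ x y : X, perp x y → perp y x)
    (hirr : ∀ x : X, ¬ perp x x)
    (hirred : Irredundant perp)
    (hrank : ∃ m : ℕ, 0 < m ∧ HasRank perp m)
    (hL1 : CondL1 perp)
    (hR1 : CondR1 perp) :
    CondL2 perp := by
  intro e g hge
  have hne_eg : e ≠ g := by rintro rfl; exact hirr e hge
  obtain ⟨C, κ, hdiv, _hinj, hhom, hperp, himg, htrans, _hfix⟩ := hR1 e g hne_eg
  set L : Set X := ortho perp (ortho perp {e, g}) with hL
  have heL : e ∈ L := subset_orthoOrtho perp hsymm {e, g} (by simp)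
  have hgL : g ∈ L := subset_orthoOrtho perp hsymm {e, g} (by simp)
  obtain ⟨s, hs⟩ := htrans e heL g hgL
  obtain ⟨t, ht⟩ := hdiv s 2 (by norm_num)
  set f : X := κ t e with hf
  have htt : κ t (κ t e) = g := by
    have h2 : t + t = s := by rw [← two_nsmul]; exact ht
    have : κ t (κ t e) = κ (t + t) e := by rw [hhom]; rfl
    rw [this, h2, hs]
  have hfe : f ≠ e := by
    intro hfeq
    apply hirr e
    have : g = e := by rw [← htt, hf] at *; rw [hfeq] at htt ⊢; rw [← htt, hfeq]
    rw [this] at hge; exact hge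
  have hfg : f ≠ g := by
    intro hfeq
    apply hfe
    have : κ t f = g := by rw [hf]; exact htt
    have heqf : κ t f = κ t e := by rw [this, ← hfeq]
    exact ((κ t).injective heqf).symm ▸ (by rw [← (κ t).injective heqf])
  have hfL : f ∈ L := by
    rw [← himg t]; exact ⟨e, heL, rfl⟩
  -- step 4: ortho {e,g} ⊆ ortho {e,f}
  have hsub_gf : ortho perp {e, g} ⊆ ortho perp {e, f} := by
    intro z hz a ha
    rcases ha with rfl | ha
    · exact hz a (by simp)
    · simp only [Set.mem_singleton_iff] at ha; subst ha
      exact hsymm _ _ (hfL z hz)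
  -- step 5: (L1) on (e, f)
  obtain ⟨h, hhe, hoh⟩ := hL1 e f hfe
  -- step 7a: ortho {g} ⊆ ortho {h}
  have hgsubh : ortho perp {g} ⊆ ortho perp {h} := by
    intro z hz
    have hzg : perp z g := hz g (by simp)
    have hzh : perp z h := by
      by_cases hze : z = e
      · subst hze; exact hsymm _ _ hhe
      · obtain ⟨w, hwe, how⟩ := hL1 e z hze
        have hg_ez : g ∈ ortho perp {e, z} := by
          intro a ha
          rcases ha with rfl | ha
          · exact hge
          · simp only [Set.mem_singleton_iff] at ha; subst ha
            exact hsymm _ _ hzg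
        rw [← how] at hg_ez
        have hgw : perp g w := hg_ez w (by simp)
        have hw_eg : w ∈ ortho perp {e, g} := by
          intro a ha
          rcases ha with rfl | ha
          · exact hwe
          · simp only [Set.mem_singleton_iff] at ha; subst ha
            exact hsymm _ _ hgw
        have hw_eh : w ∈ ortho perp {e, h} := by
          rw [hoh]; exact hsub_gf hw_eg
        have hhw : perp h w := hsymm _ _ (hw_eh h (by simp))
        have hh_ew : h ∈ ortho perp {e, w} := by
          intro a ha
          rcases ha with rfl | ha
          · exact hhe
          · simp only [Set.mem_singleton_iff] at ha; subst ha
            exact hhw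
        rw [how] at hh_ew
        exact hsymm _ _ (hh_ew z (by simp))
    intro a ha
    simp only [Set.mem_singleton_iff] at ha; subst ha
    exact hzh
  have hgh : g = h := atom_of_ortho_subset perp hsymm hirred hR1 hgsubh
  refine ⟨f, hfe, hfg, ?_⟩
  rw [← hoh, hgh]
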